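/- If s, D > 0 satisfy 4·cosh(s/2) ≤ 3·cosh(D) − 1 and moreover cosh(s/2) ≤ 1/(2·sin(π/(12g−6))) for an integer g ≥ 2, then s/D ≤ 2·arccosh(1/(2 sin(π/(12g−6)))) / arccosh(2/(3 sin(π/(12g−6))) + 1/3). -/
import Mathlib


open Real

noncomputable def arccosh (x : ℝ) : ℝ := Real.log (x + Real.sqrt (x ^ 2 - 1))

lemma arccosh_cosh {x : ℝ} (hx : 0 ≤ x) : arccosh (Real.cosh x) = x := by
  unfold arccosh
  have h1 : Real.cosh x ^ 2 - 1 = Real.sinh x ^ 2 := by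
    have := Real.cosh_sq x; linarith
  rw [h1, Real.sqrt_sq (Real.sinh_nonneg_iff.2 hx), Real.cosh_add_sinh, Real.log_exp]

lemma cosh_arccosh {y : ℝ} (hy : 1 ≤ y) : Real.cosh (arccosh y) = y := by
  unfold arccosh
  have hsq : Real.sqrt (y ^ 2 - 1) ^ 2 = y ^ 2 - 1 :=
    Real.sq_sqrt (by nlinarith)
  have hsn : 0 ≤ Real.sqrt (y ^ 2 - 1) := Real.sqrt_nonneg _
  have ht : 0 < y + Real.sqrt (y ^ 2 - 1) := by linarith
  rw [Real.cosh_eq, Real.exp_log ht, ← Real.log_inv, Real.exp_log (by positivity)]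
  have hinv : (y + Real.sqrt (y ^ 2 - 1))⁻¹ = y - Real.sqrt (y ^ 2 - 1) := by
    apply inv_eq_of_mul_eq_one_right
    nlinarith
  rw [hinv]; ring

lemma arccosh_nonneg {y : ℝ} (hy : 1 ≤ y) : 0 ≤ arccosh y :=
  Real.log_nonneg (by have := Real.sqrt_nonneg (y ^ 2 - 1); linarith)

lemma arccosh_le_arccosh {a b : ℝ} (ha : 1 ≤ a) (hab : a ≤ b) :
    arccosh a ≤ arccosh b := by
  unfold arccosh
  have hs := Real.sqrt_nonneg (a ^ 2 - 1)
  apply Real.log_le_log (by linarith)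
  have : Real.sqrt (a ^ 2 - 1) ≤ Real.sqrt (b ^ 2 - 1) :=
    Real.sqrt_le_sqrt (by nlinarith)
  linarith

lemma arccosh_pos {y : ℝ} (hy : 1 < y) : 0 < arccosh y :=
  Real.log_pos (by have := Real.sqrt_nonneg (y ^ 2 - 1); linarith)

lemma lipschitz_step (u v : ℝ) (hu : 0 ≤ u) (huv : u ≤ v) :
    arccosh ((4 * Real.cosh v + 1) / 3) ≤ arccosh ((4 * Real.cosh u + 1) / 3) + (v - u) := by
  set A := arccosh ((4 * Real.cosh u + 1) / 3) with hA
  set w := v - u with hw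
  have hcu := Real.one_le_cosh u
  have h1 : (1 : ℝ) ≤ (4 * Real.cosh u + 1) / 3 := by linarith
  have hcoshA : Real.cosh A = (4 * Real.cosh u + 1) / 3 := cosh_arccosh h1
  have hAnn : 0 ≤ A := arccosh_nonneg h1
  have hwn : 0 ≤ w := by simp [hw]; linarith
  have hsu : 0 ≤ Real.sinh u := Real.sinh_nonneg_iff.2 hu
  have hsw : 0 ≤ Real.sinh w := Real.sinh_nonneg_iff.2 hwn
  have hsA : 0 ≤ Real.sinh A := Real.sinh_nonneg_iff.2 hAnn
  have hcw : 1 ≤ Real.cosh w := Real.one_le_cosh w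
  have hsqA : Real.sinh A ^ 2 = ((4 * Real.cosh u + 1) / 3) ^ 2 - 1 := by
    have := Real.cosh_sq A; rw [hcoshA] at this; linarith
  have hsqu : Real.sinh u ^ 2 = Real.cosh u ^ 2 - 1 := by
    have := Real.cosh_sq u; linarith
  have hkey : (4 / 3) * Real.sinh u ≤ Real.sinh A := by
    nlinarith [sq_nonneg (Real.sinh A - (4 / 3) * Real.sinh u),
      sq_nonneg (Real.sinh A + (4 / 3) * Real.sinh u)]
  have hvw : v = u + w := by simp [hw]
  have hbound : (4 * Real.cosh v + 1) / 3 ≤ Real.cosh (A + w) := by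
    rw [hvw, Real.cosh_add, Real.cosh_add, hcoshA]
    nlinarith [mul_le_mul_of_nonneg_right hkey hsw]
  calc arccosh ((4 * Real.cosh v + 1) / 3)
      ≤ arccosh (Real.cosh (A + w)) := by
        apply arccosh_le_arccosh _ hbound
        have := Real.one_le_cosh v; linarith
    _ = A + w := arccosh_cosh (by linarith)

theorem ratio_bound_genus_g (g : ℕ) (hg : 2 ≤ g) (s D : ℝ) (hs : 0 < s) (hD : 0 < D)
    (hmain : 4 * Real.cosh (s / 2) ≤ 3 * Real.cosh D - 1)
    (hbavard : Real.cosh (s / 2) ≤ 1 / (2 * Real.sin (π / (12 * (g : ℝ) - 6)))) :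
    s / D ≤ 2 * arccosh (1 / (2 * Real.sin (π / (12 * (g : ℝ) - 6))))
      / arccosh (2 / (3 * Real.sin (π / (12 * (g : ℝ) - 6))) + 1 / 3) := by
  have hg2 : (2 : ℝ) ≤ (g : ℝ) := by exact_mod_cast hg
  set t := Real.sin (π / (12 * (g : ℝ) - 6)) with ht
  have hden : (1 : ℝ) < 12 * (g : ℝ) - 6 := by linarith
  have htpos : 0 < t := by
    apply Real.sin_pos_of_pos_of_lt_pi
    · positivity
    · exact div_lt_self Real.pi_pos hden
  set B := 1 / (2 * t) with hB
  have hc1 : 1 < Real.cosh (s / 2) := Real.one_lt_cosh.2 (by positivity)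
  have hB1 : 1 < B := lt_of_lt_of_le hc1 hbavard
  have hrw : 2 / (3 * t) + 1 / 3 = (4 * B + 1) / 3 := by
    rw [hB]; field_simp; ring
  rw [hrw]
  set u := s / 2 with hu
  set v := arccosh B with hv
  have hupos : 0 < u := by positivity
  have hcoshv : Real.cosh v = B := cosh_arccosh hB1.le
  have huv : u ≤ v := by
    have : arccosh (Real.cosh u) ≤ arccosh B := arccosh_le_arccosh hc1.le hbavard
    rwa [arccosh_cosh hupos.le] at this
  set P := arccosh ((4 * Real.cosh u + 1) / 3) with hP
  set Q := arccosh ((4 * B + 1) / 3) with hQ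
  have hPpos : 0 < P := arccosh_pos (by linarith)
  have hQpos : 0 < Q := arccosh_pos (by linarith)
  have hPD : P ≤ D := by
    have h1 : (4 * Real.cosh u + 1) / 3 ≤ Real.cosh D := by linarith
    have := arccosh_le_arccosh (by have := Real.one_le_cosh u; linarith) h1
    rwa [arccosh_cosh hD.le] at this
  have hPu : u ≤ P := by
    have h1 : Real.cosh u ≤ (4 * Real.cosh u + 1) / 3 := by linarith
    have := arccosh_le_arccosh hc1.le h1
    rwa [arccosh_cosh hupos.le] at this
  have hLip : Q ≤ P + (v - u) := by
    have := lipschitz_step u v hupos.le huv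
    rwa [hcoshv] at this
  have step1 : s / D ≤ 2 * u / P := by
    rw [show s = 2 * u by rw [hu]; ring]
    apply div_le_div_of_nonneg_left (by linarith) hPpos hPD
  have step2 : 2 * u / P ≤ 2 * v / Q := by
    rw [div_le_div_iff₀ hPpos hQpos]
    nlinarith [mul_le_mul_of_nonneg_left hLip hupos.le, mul_le_mul_of_nonneg_right huv hPpos.le]
  linarith [step1, step2]
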